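/- arXiv:1009.0394 — 3 statements merged into one kernel-verified Lean document; each statement's English description precedes it below -/
import Mathlib

section
/- Let m ≥ 1, d ≥ 0, p ≥ 0 be integers, let h_0, …, h_d be integers (with the convention h_j = 0 for j < 0 or j > d), let β_0, …, β_p be integers, and let 1 ≤ d_0 < d_1 < … < d_p be integers, and assume the identity (1−z)^m · (Σ_{j=0}^{d} h_j z^j) = 1 + Σ_{i=0}^{p} (−1)^{i+1} β_i z^{d_i} holds in ℤ[z]. If moreover β_i ≥ C(p,i) for every 0 ≤ i ≤ p, then Σ_{ℓ=0}^{d_i} (−1)^{ℓ+i+1} C(m,ℓ) h_{d_i−ℓ} ≥ C(p,i) for every 0 ≤ i ≤ p. (This is Corollary 3.3: combining the Betti number formula of Theorem 3.1 with the lower bound β_i ≥ C(p,i) valid for modules with a pure resolution of projective dimension p yields these inequalities for the h-vector.) -/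
open Polynomial Finset

lemma coeff_one_sub_X_pow' (m k : ℕ) :
    ((1 - X : ℤ[X]) ^ m).coeff k = (-1) ^ k * (m.choose k : ℤ) := by
  have h1 : (1 - X : ℤ[X]) = -(X + C (-1)) := by simp; ring
  rw [h1, neg_pow]
  have h2 : ((-1 : ℤ[X]) ^ m) = C ((-1 : ℤ) ^ m) := by simp
  rw [h2, coeff_C_mul, coeff_X_add_C_pow]
  rcases le_or_gt k m with hk | hk
  · rw [← mul_assoc, ← pow_add, show m + (m - k) = 2 * (m - k) + k by omega,
      pow_add, pow_mul]
    simp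
  · simp [Nat.choose_eq_zero_of_lt hk]

/-- Corollary 3.3: binomial inequalities for the h-vector from the bound β_i ≥ C(p,i). -/
theorem pure_resolution_h_vector_inequalities (m d p : ℕ) (hm : 1 ≤ m)
    (h : ℕ → ℤ) (hh : ∀ j, d < j → h j = 0)
    (β : ℕ → ℤ) (D : ℕ → ℕ)
    (hD0 : 1 ≤ D 0) (hDmono : ∀ i, i < p → D i < D (i + 1))
    (hid : (1 - X : ℤ[X]) ^ m * ∑ j ∈ range (d + 1), C (h j) * X ^ j
      = 1 + ∑ i ∈ range (p + 1), (-1) ^ (i + 1) * C (β i) * X ^ (D i))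
    (hβ : ∀ i ≤ p, (p.choose i : ℤ) ≤ β i) :
    ∀ i ≤ p, (p.choose i : ℤ) ≤ ∑ ℓ ∈ range (D i + 1),
      (-1) ^ (ℓ + i + 1) * (m.choose ℓ : ℤ) * h (D i - ℓ) := by
  -- D is strictly monotone on [0, p]
  have hDsm : StrictMonoOn D (Set.Iic p) := by
    intro a ha b hb hab
    have : ∀ k, a + k ≤ p → D a < D (a + k) ∨ k = 0 := by
      intro k
      induction k with
      | zero => intro _; right; rfl
      | succ n ih =>
        intro hk
        left
        rcases ih (by omega) with h1 | h1
        · exact h1.trans (hDmono _ (by omega))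
        · rw [h1]; simpa using hDmono a (by omega)
    rcases this (b - a) (by simp at hb; omega) with h1 | h1
    · rwa [show a + (b - a) = b by omega] at h1
    · omega
  have hDpos : ∀ i ≤ p, 1 ≤ D i := by
    intro i hi
    rcases Nat.eq_zero_or_pos i with rfl | hpos
    · exact hD0
    · exact hD0.trans (hDsm (by simp) (by simpa using hi) hpos).le
  -- coefficient of the h-polynomial
  have hScoeff : ∀ k, (∑ j ∈ range (d + 1), C (h j) * X ^ j).coeff k = h k := by
    intro k
    rw [finset_sum_coeff]
    simp only [coeff_C_mul, coeff_X_pow]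
    rcases le_or_gt k d with hk | hk
    · rw [Finset.sum_eq_single k]
      · simp
      · intro j _ hjk
        rw [if_neg fun e => hjk e.symm, mul_zero]
      · intro hc; exact absurd (mem_range.mpr (by omega)) hc
    · rw [Finset.sum_eq_zero, hh k hk]
      intro j hj
      simp only [mem_range] at hj
      rw [if_neg (by omega), mul_zero]
  intro i hi
  -- compute the coefficient of X^(D i) on both sides
  have hc := congrArg (fun q : ℤ[X] => q.coeff (D i)) hid
  simp only [coeff_add, coeff_mul] at hc
  rw [Finset.Nat.sum_antidiagonal_eq_sum_range_succ_mk] at hc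
  have hL : ∑ ℓ ∈ range (D i + 1), ((1 - X : ℤ[X]) ^ m).coeff ℓ *
      (∑ j ∈ range (d + 1), C (h j) * X ^ j).coeff (D i - ℓ)
      = ∑ ℓ ∈ range (D i + 1), (-1) ^ ℓ * (m.choose ℓ : ℤ) * h (D i - ℓ) := by
    apply Finset.sum_congr rfl
    intro ℓ _
    rw [coeff_one_sub_X_pow', hScoeff]
  rw [hL] at hc
  have hone : (1 : ℤ[X]).coeff (D i) = 0 := by
    rw [coeff_one, if_neg]
    exact fun hcon => by have := hDpos i hi; omega
  rw [finset_sum_coeff] at hc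
  have hR : ∑ i' ∈ range (p + 1), ((-1) ^ (i' + 1) * C (β i') * X ^ (D i')).coeff (D i)
      = (-1) ^ (i + 1) * β i := by
    rw [Finset.sum_eq_single i]
    · have : ((-1 : ℤ[X]) ^ (i + 1) * C (β i)) = C ((-1) ^ (i + 1) * β i) := by simp
      rw [mul_assoc, ← mul_assoc, this, coeff_C_mul, coeff_X_pow, if_pos rfl, mul_one]
    · intro j hj hji
      simp only [mem_range] at hj
      have : D j ≠ D i := fun hDij =>
        hji (hDsm.injOn (by simp; omega) (by simpa using hi) hDij)
      have h2 : ((-1 : ℤ[X]) ^ (j + 1) * C (β j)) = C ((-1) ^ (j + 1) * β j) := by simp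
      rw [mul_assoc, ← mul_assoc, h2, coeff_C_mul, coeff_X_pow, if_neg (Ne.symm this), mul_zero]
    · intro hcon; exact absurd (by simp; omega : i ∈ range (p + 1)) hcon
  rw [hone, hR, zero_add] at hc
  -- conclude
  have hkey : ∑ ℓ ∈ range (D i + 1), (-1) ^ (ℓ + i + 1) * (m.choose ℓ : ℤ) * h (D i - ℓ)
      = β i := by
    have : ∀ ℓ, ((-1 : ℤ)) ^ (ℓ + i + 1) = (-1) ^ (i + 1) * (-1) ^ ℓ := by
      intro ℓ; rw [← pow_add]; ring_nf
    calc ∑ ℓ ∈ range (D i + 1), (-1) ^ (ℓ + i + 1) * (m.choose ℓ : ℤ) * h (D i - ℓ)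
        = (-1) ^ (i + 1) * ∑ ℓ ∈ range (D i + 1), (-1) ^ ℓ * (m.choose ℓ : ℤ) * h (D i - ℓ) := by
          rw [Finset.mul_sum]; exact Finset.sum_congr rfl fun ℓ _ => by rw [this ℓ]; ring
      _ = (-1) ^ (i + 1) * ((-1) ^ (i + 1) * β i) := by rw [hc]
      _ = β i := by rw [← mul_assoc, ← pow_add, show i + 1 + (i + 1) = 2 * (i + 1) by ring,
            pow_mul]; simp
  rw [hkey]
  exact hβ i hi
end

section
/- Let m ≥ 1, d ≥ 0, p ≥ 0 be integers, let h_0, …, h_d be integers, let β_0, …, β_p be integers, and let 1 ≤ d_0 < d_1 < … < d_p be integers. If the identity (1−z)^m · (Σ_{j=0}^{d} h_j z^j) = 1 + Σ_{i=0}^{p} (−1)^{i+1} β_i z^{d_i} holds in ℤ[z], then Σ_{i=0}^{p} (−1)^{i+1} β_i (d_i)^m = (−1)^m · m! · (Σ_{j=0}^{d} h_j). (This is the multiplicity formula used in Section 4: for a graded module of codimension m with a pure free resolution with shifts d_i and Betti numbers β_i, the Hilbert–Samuel multiplicity e = Σ_j h_j is determined by the alternating sum of the β_i weighted by the m-th powers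 of the shifts.) -/
open Polynomial Finset

private noncomputable def Θ : ℤ[X] →+ ℤ[X] where
  toFun P := X * derivative P
  map_zero' := by simp
  map_add' P Q := by simp [mul_add]

private lemma theta_apply (P : ℤ[X]) : Θ P = X * derivative P := rfl

private lemma theta_iter_sum {α : Type*} (s : Finset α) (f : α → ℤ[X]) (m : ℕ) :
    (⇑Θ)^[m] (∑ i ∈ s, f i) = ∑ i ∈ s, (⇑Θ)^[m] (f i) := by
  induction m generalizing f with
  | zero => simp
  | succ k ih =>
      rw [Function.iterate_succ_apply, map_sum, ih]
      simp [Function.iterate_succ_apply]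

private lemma theta_monomial (c : ℤ) (n : ℕ) : Θ (C c * X ^ n) = C (c * n) * X ^ n := by
  cases n with
  | zero => simp [theta_apply]
  | succ k =>
      rw [theta_apply, derivative_C_mul, derivative_X_pow]
      push_cast
      rw [C_mul]
      ring

private lemma theta_iter_monomial (c : ℤ) (n m : ℕ) :
    (⇑Θ)^[m] (C c * X ^ n) = C (c * (n : ℤ) ^ m) * X ^ n := by
  induction m generalizing c with
  | zero => simp
  | succ k ih =>
      have e : c * (n : ℤ) * (n : ℤ) ^ k = c * (n : ℤ) ^ (k + 1) := by ring
      rw [Function.iterate_succ_apply, theta_monomial, ih, e]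

private lemma theta_key : ∀ (m : ℕ) (g : ℤ[X]),
    ((⇑Θ)^[m] ((1 - X) ^ m * g)).eval 1 = (-1) ^ m * m.factorial * g.eval 1 := by
  intro m
  induction m with
  | zero => intro g; simp
  | succ k ih =>
      intro g
      rw [Function.iterate_succ_apply]
      have hT : Θ ((1 - X) ^ (k + 1) * g)
          = (1 - X) ^ k * (X * ((1 - X) * derivative g - C ((k : ℤ) + 1) * g)) := by
        rw [theta_apply, derivative_mul, derivative_pow]
        have h1 : derivative (1 - X : ℤ[X]) = -1 := by simp
        have h2 : k + 1 - 1 = k := rfl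
        rw [h1, h2]
        push_cast
        ring
      rw [hT, ih]
      have he : (X * ((1 - X) * derivative g - C ((k : ℤ) + 1) * g)).eval 1
          = -((k : ℤ) + 1) * g.eval 1 := by
        simp
        ring
      rw [he, Nat.factorial_succ]
      push_cast
      ring

/-- The multiplicity formula: for a pure resolution of codimension `m`, the
alternating sum of the Betti numbers weighted by the `m`-th powers of the shifts
equals `(-1)^m · m! · Σ h_j`. -/
theorem pure_resolution_multiplicity (m d p : ℕ) (hm : 1 ≤ m)
    (h : ℕ → ℤ) (hh : ∀ j, d < j → h j = 0)
    (β : ℕ → ℤ) (D : ℕ → ℕ)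
    (hD0 : 1 ≤ D 0) (hDmono : ∀ i, i < p → D i < D (i + 1))
    (hid : (1 - X : ℤ[X]) ^ m * ∑ j ∈ range (d + 1), C (h j) * X ^ j
      = 1 + ∑ i ∈ range (p + 1), (-1) ^ (i + 1) * C (β i) * X ^ (D i)) :
    ∑ i ∈ range (p + 1), (-1) ^ (i + 1) * β i * ((D i : ℤ)) ^ m
      = (-1) ^ m * (m.factorial : ℤ) * ∑ j ∈ range (d + 1), h j := by
  have key := congrArg (fun P : ℤ[X] => ((⇑Θ)^[m] P).eval 1) hid
  -- LHS
  rw [theta_key] at key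
  have hevalH : (∑ j ∈ range (d + 1), C (h j) * X ^ j : ℤ[X]).eval 1
      = ∑ j ∈ range (d + 1), h j := by
    rw [eval_finset_sum]
    simp
  rw [hevalH] at key
  -- RHS
  obtain ⟨k, rfl⟩ : ∃ k, m = k + 1 := ⟨m - 1, (Nat.succ_pred_eq_of_pos hm).symm⟩
  have hone : (⇑Θ)^[k + 1] (1 : ℤ[X]) = 0 := by
    rw [Function.iterate_succ_apply]
    have hΘ1 : Θ (1 : ℤ[X]) = 0 := by simp [theta_apply]
    rw [hΘ1]
    exact iterate_map_zero Θ k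
  have hterm : ∀ i : ℕ, ((-1) ^ (i + 1) * C (β i) * X ^ (D i) : ℤ[X])
      = C ((-1) ^ (i + 1) * β i) * X ^ (D i) := by
    intro i
    rw [map_mul, map_pow, map_neg, map_one]
  have hRHS : ((⇑Θ)^[k + 1] (1 + ∑ i ∈ range (p + 1),
      (-1) ^ (i + 1) * C (β i) * X ^ (D i) : ℤ[X])).eval 1
      = ∑ i ∈ range (p + 1), (-1) ^ (i + 1) * β i * ((D i : ℤ)) ^ (k + 1) := by
    have hsplit : ((⇑Θ)^[k + 1] (1 + ∑ i ∈ range (p + 1),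
        (-1) ^ (i + 1) * C (β i) * X ^ (D i) : ℤ[X]))
        = (⇑Θ)^[k + 1] (1 : ℤ[X]) + ∑ i ∈ range (p + 1),
          (⇑Θ)^[k + 1] (C ((-1) ^ (i + 1) * β i) * X ^ (D i)) := by
      rw [Finset.sum_congr rfl (fun i _ => hterm i), iterate_map_add, theta_iter_sum]
    rw [hsplit, hone, zero_add, eval_finset_sum]
    apply Finset.sum_congr rfl
    intro i _
    rw [theta_iter_monomial]
    simp [mul_assoc]
  rw [hRHS] at key
  linarith [key]
end

section
/- Let Δ be a simplicial complex on [n] = {1, …, n} and let k* ≥ 1 be such that every subset of [n] of cardinality k* − 1 belongs to Δ but some subset of cardinality k* does not. Let Δ* = { F ⊆ [n] : [n] ∖ F ∉ Δ } be the Alexander dual, set d* = n − k*, let f*_{i−1} denote the number of elements of Δ* of cardinality i, and define the h-vector h*_0, …, h*_{d*} of Δ* by Σ_{j=0}^{d*} h*_j z^j = Σ_{i=0}^{d*} f*_{i−1} z^i (1−z)^{d*−i}. Suppose t ≥ 1, p ≥ 0 and integers β*_0, …, β*_p satisfy the identity (1−z)^{k*} · (Σ_{j=0}^{d*} h*_j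 z^j) = 1 + Σ_{i=0}^{p} (−1)^{i+1} β*_i z^{t+i} in ℤ[z]. Then Σ_{i=0}^{p} (−1)^{i+1} β*_i (t+i)^{k*} = (−1)^{k*} · k*! · ( C(n,k*) − f_{k*−1}(Δ) ), where f_{k*−1}(Δ) is the number of elements of Δ of cardinality k*. (This is Corollary 4.4: for a Cohen–Macaulay complex Δ of dimension d−1 on [n], by the Eagon–Reiner theorem k[Δ*] has a t-linear resolution with t = n−d, and the equation relates the Betti numbers β*_i of that resolution to C(n,k*) − f_{k*−1}, the multiplicity of k[Δ*].) -/
open Polynomial Finset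

noncomputable def thetaOp : Module.End ℤ (Polynomial ℤ) :=
  (LinearMap.mulLeft ℤ (X : Polynomial ℤ)).comp
    (Polynomial.derivative : Polynomial ℤ →ₗ[ℤ] Polynomial ℤ)

lemma thetaOp_apply (P : Polynomial ℤ) : thetaOp P = X * derivative P := rfl

lemma thetaOp_CXpow (c : ℤ) (m : ℕ) :
    thetaOp (C c * X ^ m) = C (c * (m : ℤ)) * X ^ m := by
  cases m with
  | zero => simp [thetaOp_apply]
  | succ m' =>
      rw [thetaOp_apply, derivative_C_mul, derivative_X_pow, C_mul]
      simp only [Nat.add_sub_cancel]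
      push_cast
      ring

lemma thetaOp_pow_CXpow (k : ℕ) (c : ℤ) (m : ℕ) :
    (thetaOp ^ k) (C c * X ^ m) = C (c * (m : ℤ) ^ k) * X ^ m := by
  induction k with
  | zero => simp
  | succ k ih =>
      rw [pow_succ', Module.End.mul_apply, ih, thetaOp_CXpow, mul_assoc, ← pow_succ]

lemma eval_thetaOp_pow (j : ℕ) (Q : Polynomial ℤ) :
    eval 1 ((thetaOp ^ j) ((1 - X) ^ j * Q))
      = (-1) ^ j * (j.factorial : ℤ) * eval 1 Q := by
  induction j generalizing Q with
  | zero => simp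
  | succ j ih =>
      have hstep : thetaOp ((1 - X) ^ (j + 1) * Q)
          = (1 - X) ^ j * (-(C ((j : ℤ) + 1)) * X * Q + (1 - X) * (X * derivative Q)) := by
        rw [thetaOp_apply, derivative_mul, derivative_pow]
        have h1 : derivative (1 - X : Polynomial ℤ) = -1 := by simp
        rw [h1]
        simp only [Nat.add_sub_cancel]
        push_cast
        ring_nf
      rw [pow_succ, Module.End.mul_apply, hstep, ih]
      simp [Nat.factorial_succ]
      ring

/-- Corollary 4.4: for a complex `Δ` on `[n]` with `k` as in Corollary 2.8, if the
Stanley–Reisner ring of the Alexander dual `Δ* = {F : Fᶜ ∉ Δ}` has a `t`-linear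
free resolution with Betti numbers `β* i` (encoded by the Hilbert-series identity,
where `h*` is the h-vector of `Δ*`, `d* = n - k`, and `f*_{i-1}` counts the faces
of `Δ*` of cardinality `i`), then the alternating sum of the `β* i` weighted by
the `k`-th powers of the shifts equals `(-1)^k · k! · (C(n,k) - f_{k-1}(Δ))`. -/
theorem alexander_dual_multiplicity_formula (n : ℕ) (Δ : Finset (Finset (Fin n)))
    (hclosed : ∀ F ∈ Δ, ∀ G ⊆ F, G ∈ Δ)
    (k : ℕ) (hk : 1 ≤ k)
    (hall : ∀ F : Finset (Fin n), F.card = k - 1 → F ∈ Δ)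
    (hsome : ∃ F : Finset (Fin n), F.card = k ∧ F ∉ Δ)
    (hstar : ℕ → ℤ)
    (hdef : ∑ j ∈ range (n - k + 1), C (hstar j) * X ^ j
      = ∑ i ∈ range (n - k + 1),
          C (((((univ : Finset (Finset (Fin n))).filter
              (fun F => Fᶜ ∉ Δ ∧ F.card = i)).card : ℤ)))
            * X ^ i * (1 - X : ℤ[X]) ^ (n - k - i))
    (t p : ℕ) (ht : 1 ≤ t) (βstar : ℕ → ℤ)
    (hres : (1 - X : ℤ[X]) ^ k * ∑ j ∈ range (n - k + 1), C (hstar j) * X ^ j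
      = 1 + ∑ i ∈ range (p + 1), (-1) ^ (i + 1) * C (βstar i) * X ^ (t + i)) :
    ∑ i ∈ range (p + 1), (-1) ^ (i + 1) * βstar i * ((t + i : ℕ) : ℤ) ^ k
      = (-1) ^ k * (k.factorial : ℤ) *
        ((n.choose k : ℤ) - ((Δ.filter (fun F => F.card = k)).card : ℤ)) := by
  classical
  obtain ⟨F₀, hF₀c, hF₀⟩ := hsome
  have hkn : k ≤ n := by
    calc k = F₀.card := hF₀c.symm
    _ ≤ Fintype.card (Fin n) := F₀.card_le_univ
    _ = n := Fintype.card_fin n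
  set H : Polynomial ℤ := ∑ j ∈ range (n - k + 1), C (hstar j) * X ^ j with hH
  -- evaluate H at 1
  have hevalH : eval 1 H = (((univ : Finset (Finset (Fin n))).filter
      (fun F => Fᶜ ∉ Δ ∧ F.card = n - k)).card : ℤ) := by
    rw [hdef, eval_finset_sum, Finset.sum_eq_single (n - k)]
    · simp
    · intro i hi hne
      have hlt : i < n - k := lt_of_le_of_ne (Nat.lt_succ_iff.mp (mem_range.mp hi)) hne
      have : n - k - i ≠ 0 := Nat.sub_ne_zero_of_lt hlt
      simp [this]
    · intro h
      exact absurd (mem_range.mpr (Nat.lt_succ_self _)) h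
  -- counting
  have hcard : ((univ : Finset (Finset (Fin n))).filter
      (fun F => Fᶜ ∉ Δ ∧ F.card = n - k)).card
      + (Δ.filter (fun F => F.card = k)).card = n.choose k := by
    have e1 : ((univ : Finset (Finset (Fin n))).filter
        (fun F => Fᶜ ∉ Δ ∧ F.card = n - k)).card
        = ((univ : Finset (Finset (Fin n))).filter
          (fun G => G ∉ Δ ∧ G.card = k)).card := by
      apply Finset.card_bij (fun F _ => Fᶜ)
      · intro F hF
        rw [mem_filter] at hF ⊢
        obtain ⟨-, h1, h2⟩ := hF
        refine ⟨mem_univ _, h1, ?_⟩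
        rw [Finset.card_compl, h2, Fintype.card_fin]
        omega
      · intro a _ b _ hab
        simpa using congrArg compl hab
      · intro G hG
        rw [mem_filter] at hG
        obtain ⟨-, h1, h2⟩ := hG
        refine ⟨Gᶜ, ?_, by simp⟩
        rw [mem_filter]
        refine ⟨mem_univ _, by simpa using h1, ?_⟩
        rw [Finset.card_compl, h2, Fintype.card_fin]
    have e2 : ((univ : Finset (Finset (Fin n))).filter
        (fun G => G ∈ Δ ∧ G.card = k)).card = (Δ.filter (fun F => F.card = k)).card := by
      congr 1
      ext G
      simp [mem_filter]
    have e3 : ((univ : Finset (Finset (Fin n))).filter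
        (fun G => G.card = k)).card = n.choose k := by
      rw [← Finset.powerset_univ, ← Finset.powersetCard_eq_filter,
        Finset.card_powersetCard, Finset.card_univ, Fintype.card_fin]
    have e4 := Finset.card_filter_add_card_filter_not
      (s := (univ : Finset (Finset (Fin n))).filter (fun G => G.card = k))
      (p := fun G => G ∈ Δ)
    rw [Finset.filter_filter, Finset.filter_filter] at e4
    have c1 : ((univ : Finset (Finset (Fin n))).filter (fun G => G ∉ Δ ∧ G.card = k))
        = ((univ : Finset (Finset (Fin n))).filter (fun G => G.card = k ∧ G ∉ Δ)) := by
      ext G; simp [and_comm]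
    have c2 : ((univ : Finset (Finset (Fin n))).filter (fun G => G ∈ Δ ∧ G.card = k))
        = ((univ : Finset (Finset (Fin n))).filter (fun G => G.card = k ∧ G ∈ Δ)) := by
      ext G; simp [and_comm]
    rw [e1, ← e2, c1, c2]
    rw [e3] at e4
    omega
  -- apply theta^k and evaluate at 1 on hres
  have hmain := congrArg (fun P => eval 1 ((thetaOp ^ k) P)) hres
  rw [eval_thetaOp_pow] at hmain
  obtain ⟨k', rfl⟩ : ∃ k', k = k' + 1 := ⟨k - 1, (Nat.succ_pred_eq_of_pos hk).symm⟩
  have hone : (thetaOp ^ (k' + 1)) (1 : Polynomial ℤ) = 0 := by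
    rw [pow_succ, Module.End.mul_apply]
    have h0 : thetaOp (1 : Polynomial ℤ) = 0 := by
      rw [thetaOp_apply]; simp
    rw [h0, map_zero]
  rw [map_add, hone, map_sum, zero_add] at hmain
  have hterm : ∀ i ∈ range (p + 1),
      eval 1 ((thetaOp ^ (k' + 1)) ((-1) ^ (i + 1) * C (βstar i) * X ^ (t + i)))
        = (-1) ^ (i + 1) * βstar i * ((t + i : ℕ) : ℤ) ^ (k' + 1) := by
    intro i _
    have hC : ((-1 : Polynomial ℤ)) ^ (i + 1) * C (βstar i)
        = C ((-1) ^ (i + 1) * βstar i) := by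
      rw [C_mul, ← C_1, ← C_neg, ← C_pow]
    rw [hC, thetaOp_pow_CXpow]
    simp [mul_assoc]
  rw [hevalH, eval_finset_sum, Finset.sum_congr rfl hterm] at hmain
  have hcast : (((univ : Finset (Finset (Fin n))).filter
      (fun F => Fᶜ ∉ Δ ∧ F.card = n - (k' + 1))).card : ℤ)
      = (n.choose (k' + 1) : ℤ) - ((Δ.filter (fun F => F.card = (k' + 1))).card : ℤ) := by
    push_cast [← hcard]
    ring
  rw [hcast] at hmain
  exact hmain.symm
end
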